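/- Fix k ≥ 1 and let q ∈ ℤ. Then ∂_0(ĉ^{-1}_{k+1}·c^1_q) = 2(f̃^1_k·c^2_q + a^1_{k+1}·c^2_{q-1}), ∂_1(ĉ^{-1}_{k+1}·c^1_q) = 2(f^0_k·c^2_q + a^0_{k+1}·c^2_{q-1}), and (∂_0 + ∂_1)(ĉ^{-1}_{k+1}·c^1_q) = 2(c^1_k·c^2_q + c^1_{k+1}·c^2_{q-1}). -/

import Mathlib

/-!
The polynomial ring `R2 = ℚ[c₁, c₂, …, t₁, t₂, …, f_k]`: the variable `Sum.inl p`
(for `p ≥ 1`) is `c_p`, `Sum.inr i` (for `i ≥ 1`) is `t_i`, and `Sum.inl 0` is the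
adjoined variable `f_k`.
-/

noncomputable section
open MvPolynomial Finset
open scoped Classical

abbrev R2 : Type := MvPolynomial (ℕ ⊕ ℕ) ℚ

/-- The variable `t_i`. -/
def Tv (i : ℕ) : R2 := X (Sum.inr i)

/-- The adjoined variable `f_k`. -/
def fk : R2 := X (Sum.inl 0)

/-- `c_p`, with the conventions `c_0 = 1` and `c_p = 0` for `p < 0`. -/
def Cv (p : ℤ) : R2 := if p < 0 then 0 else if p = 0 then 1 else X (Sum.inl p.toNat)

/-- The complete homogeneous symmetric polynomial `h_j` evaluated on a list. -/
def hfun : List R2 → ℕ → R2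
  | [], j => if j = 0 then 1 else 0
  | a :: L, j => ∑ i ∈ Finset.range (j + 1), a ^ i * hfun L (j - i)

/-- The elementary symmetric polynomial `e_j` evaluated on a list. -/
def efun : List R2 → ℕ → R2
  | [], j => if j = 0 then 1 else 0
  | _ :: _, 0 => 1
  | a :: L, j + 1 => efun L (j + 1) + a * efun L j

/-- The list `(-t_1, …, -t_r)`. -/
def negT (r : ℕ) : List R2 := (List.range r).map fun i => -Tv (i + 1)

/-- `h^r_j(-t)`: complete homogeneous for `r ≥ 0`, elementary `e^{-r}_j(-t)` for `r < 0`. -/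
def hmt (r : ℤ) (j : ℕ) : R2 :=
  if 0 ≤ r then hfun (negT r.toNat) j else efun (negT (-r).toNat) j

/-- `c^r_p := Σ_{j=0}^p c_{p-j} h^r_j(-t)`. -/
def cc (r p : ℤ) : R2 := ∑ j ∈ Finset.range (p.toNat + 1), Cv (p - j) * hmt r j

/-- `a^s_p := (1/2)c_p + Σ_{j=1}^p c_{p-j} h^s_j(-t)`. -/
def aa (s p : ℤ) : R2 :=
  C (1/2 : ℚ) * Cv p + ∑ j ∈ Finset.Icc 1 p.toNat, Cv (p - j) * hmt s j

/-- `e^s_s(-t) = (-t_1)⋯(-t_s)`. -/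
def eprod (s : ℤ) : R2 := ∏ i ∈ Finset.range s.toNat, -Tv (i + 1)

/-- `ĉ^r_p := c^r_p + (2f_k - c_k)e^{p-k}_{p-k}(-t)` when `r = k - p < 0`, else `c^r_p`. -/
def chat (k : ℕ) (r p : ℤ) : R2 :=
  if r = (k : ℤ) - p ∧ r < 0 then cc r p + (2 * fk - Cv k) * eprod (p - k) else cc r p

/-- `f̃_k := c_k - f_k`. -/
def ftil (k : ℕ) : R2 := Cv k - fk

/-- `f^s_k := f_k + Σ_{j=1}^k c_{k-j} h^s_j(-t)`. -/
def fks (k : ℕ) (s : ℤ) : R2 := fk + ∑ j ∈ Finset.Icc 1 k, Cv ((k : ℤ) - j) * hmt s j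

/-- `f̃^s_k := c_k - 2f_k + f^s_k`. -/
def ftils (k : ℕ) (s : ℤ) : R2 := Cv k - 2 * fk + fks k s

/-- Images of the variables under the automorphism `s_i` (depending on `k` via `s_0(f_k)`). -/
def sImgF (k : ℕ) : ℕ → ℕ ⊕ ℕ → R2
  | 0, Sum.inr j => if j = 1 then -Tv 2 else if j = 2 then -Tv 1 else Tv j
  | 0, Sum.inl p =>
      if p = 0 then fk - (Tv 1 + Tv 2) * cc 2 ((k : ℤ) - 1)
      else Cv p - 2 * (Tv 1 + Tv 2) *
        ∑ j ∈ Finset.range p, (-1 : R2) ^ j *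
          (∑ a ∈ Finset.range (j + 1), Tv 1 ^ a * Tv 2 ^ (j - a)) * Cv ((p : ℤ) - 1 - j)
  | i + 1, Sum.inr j =>
      if j = i + 1 then Tv (i + 2) else if j = i + 2 then Tv (i + 1) else Tv j
  | _ + 1, Sum.inl p => X (Sum.inl p)

/-- The ring automorphism `s_i` of `R2`. -/
def sA (k i : ℕ) : R2 →ₐ[ℚ] R2 := aeval (sImgF k i)

/-- The fraction field of `R2`. -/
abbrev KK : Type := FractionRing R2

/-- The canonical embedding of `R2` into its fraction field. -/
def toK : R2 →+* KK := algebraMap R2 KK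

/-- The denominator `t_1 + t_2` (for `i = 0`) resp. `t_{i+1} - t_i` (for `i ≥ 1`). -/
def dden (i : ℕ) : R2 := if i = 0 then Tv 1 + Tv 2 else Tv (i + 1) - Tv i

/-- The divided difference operator `∂_i`, with values in the fraction field. -/
def dd (k i : ℕ) (f : R2) : KK := (toK f - toK (sA k i f)) / toK (dden i)

-- basic structural lemmas
lemma hfun_zero (L : List R2) : hfun L 0 = 1 := by
  induction L with
  | nil => simp [hfun]
  | cons a L ih => simp [hfun, ih]

lemma efun_zero (L : List R2) : efun L 0 = 1 := by
  cases L <;> rfl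

lemma hfun_single (a : R2) (j : ℕ) : hfun [a] j = a ^ j := by
  rw [hfun]
  rw [Finset.sum_eq_single_of_mem j (Finset.self_mem_range_succ j)]
  · simp [hfun]
  · intro i hi hne
    have : j - i ≠ 0 := by simp at hi; omega
    simp [hfun, this]

lemma efun_single (a : R2) (j : ℕ) :
    efun [a] j = if j = 0 then 1 else if j = 1 then a else 0 := by
  match j with
  | 0 => rfl
  | 1 => simp [efun]
  | (m+2) => simp [efun]

lemma negT_zero : negT 0 = [] := by simp [negT]

lemma negT_one : negT 1 = [-Tv 1] := by simp [negT, List.range_succ]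

lemma negT_two : negT 2 = [-Tv 1, -Tv 2] := by
  simp [negT, List.range_succ]

lemma hmt_r_zero (r : ℤ) : hmt r 0 = 1 := by
  unfold hmt; split
  · exact hfun_zero _
  · exact efun_zero _

lemma hmt_one (j : ℕ) : hmt 1 j = (-Tv 1) ^ j := by
  have : ((1:ℤ)).toNat = 1 := rfl
  rw [hmt, if_pos (by norm_num), this, negT_one, hfun_single]

lemma hmt_zero (j : ℕ) : hmt 0 j = if j = 0 then 1 else 0 := by
  rw [hmt, if_pos le_rfl]
  simp [negT_zero, hfun]

lemma hmt_neg_one (j : ℕ) :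
    hmt (-1) j = if j = 0 then 1 else if j = 1 then -Tv 1 else 0 := by
  rw [hmt, if_neg (by norm_num)]
  norm_num [negT_one, efun_single]

lemma hmt_two (j : ℕ) :
    hmt 2 j = ∑ i ∈ Finset.range (j+1), (-Tv 1) ^ i * (-Tv 2) ^ (j - i) := by
  have h2 : ((2:ℤ)).toNat = 2 := rfl
  rw [hmt, if_pos (by norm_num), h2, negT_two, hfun]
  exact Finset.sum_congr rfl fun i _ => by rw [hfun_single]
lemma hmt_one_succ (j : ℕ) : hmt 1 (j+1) = (-Tv 1) * hmt 1 j := by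
  rw [hmt_one, hmt_one, pow_succ]; ring

lemma hmt_two_succ_left (j : ℕ) :
    hmt 2 (j+1) = (-Tv 2) ^ (j+1) + (-Tv 1) * hmt 2 j := by
  rw [hmt_two, hmt_two, Finset.sum_range_succ', Finset.mul_sum]
  rw [add_comm]
  congr 1
  · simp
  · refine Finset.sum_congr rfl fun i hi => ?_
    have : j + 1 - (i + 1) = j - i := by omega
    rw [this, pow_succ]; ring

lemma hmt_two_succ_right (j : ℕ) :
    hmt 2 (j+1) = (-Tv 1) ^ (j+1) + (-Tv 2) * hmt 2 j := by
  rw [hmt_two, hmt_two, Finset.sum_range_succ, Finset.mul_sum]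
  rw [add_comm]
  congr 1
  · simp
  · refine Finset.sum_congr rfl fun i hi => ?_
    have hij : i ≤ j := by simp at hi; omega
    have : j + 1 - i = (j - i) + 1 := by omega
    rw [this, pow_succ]; ring

lemma hmt_two_sign (j : ℕ) :
    hmt 2 j = (-1) ^ j * ∑ a ∈ Finset.range (j+1), Tv 1 ^ a * Tv 2 ^ (j - a) := by
  rw [hmt_two, Finset.mul_sum]
  refine Finset.sum_congr rfl fun i hi => ?_
  have hij : i ≤ j := by simp at hi; omega
  rw [neg_pow, neg_pow]
  have : (-1 : R2) ^ i * (-1 : R2) ^ (j - i) = (-1) ^ j := by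
    rw [← pow_add]; congr 1; omega
  linear_combination (Tv 1 ^ i * Tv 2 ^ (j - i)) * this

-- Cv basics
lemma Cv_zero : Cv 0 = 1 := by simp [Cv]

lemma Cv_neg {p : ℤ} (hp : p < 0) : Cv p = 0 := by simp [Cv, hp]

lemma Cv_pos {p : ℤ} (hp : 1 ≤ p) : Cv p = X (Sum.inl p.toNat) := by
  rw [Cv, if_neg (by omega), if_neg (by omega)]

-- cc basics
lemma cc_neg (r : ℤ) {p : ℤ} (hp : p < 0) : cc r p = 0 := by
  rw [cc, show p.toNat = 0 from by omega]
  simp [Cv_neg hp]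

lemma cc_zero (r : ℤ) : cc r 0 = 1 := by
  rw [cc]
  simp [Cv_zero, hmt_r_zero]
lemma cc_nat (r : ℤ) (n : ℕ) :
    cc r (n : ℤ) = ∑ j ∈ Finset.range (n+1), Cv ((n:ℤ) - j) * hmt r j := by
  rw [cc]; norm_num

lemma cc_succ (r : ℤ) (n : ℕ) :
    cc r ((n:ℤ)+1) = Cv ((n:ℤ)+1)
      + ∑ j ∈ Finset.range (n+1), Cv ((n:ℤ) - j) * hmt r (j+1) := by
  rw [cc, show ((n:ℤ)+1).toNat = n + 1 from by omega, Finset.sum_range_succ']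
  rw [add_comm]
  congr 1
  · rw [hmt_r_zero]; push_cast; ring_nf
  · refine Finset.sum_congr rfl fun i hi => ?_
    congr 2
    push_cast; ring

/-- my auxiliary: `Σ_j c_{p-j}(-t_2)^j`. -/
def cc1' (p : ℤ) : R2 := ∑ j ∈ Finset.range (p.toNat + 1), Cv (p - j) * (-Tv 2) ^ j

lemma cc1'_neg {p : ℤ} (hp : p < 0) : cc1' p = 0 := by
  rw [cc1', show p.toNat = 0 from by omega]
  simp [Cv_neg hp]

lemma cc1'_zero : cc1' 0 = 1 := by simp [cc1', Cv_zero]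

lemma cc1_rec (n : ℕ) : cc 1 ((n:ℤ)+1) = Cv ((n:ℤ)+1) - Tv 1 * cc 1 (n:ℤ) := by
  rw [cc_succ, cc_nat, Finset.mul_sum]
  have : ∀ i ∈ Finset.range (n+1),
      Cv ((n:ℤ) - i) * hmt 1 (i+1) = -(Tv 1 * (Cv ((n:ℤ) - i) * hmt 1 i)) := by
    intro i _; rw [hmt_one_succ]; ring
  rw [Finset.sum_congr rfl this, Finset.sum_neg_distrib]
  ring

lemma cc1'_rec (n : ℕ) :
    cc1' ((n:ℤ)+1) = Cv ((n:ℤ)+1) - Tv 2 * cc1' (n:ℤ) := by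
  rw [cc1', cc1', show ((n:ℤ)+1).toNat = n + 1 from by omega,
    show ((n:ℤ)).toNat = n from by omega, Finset.sum_range_succ', Finset.mul_sum]
  have h0 : Cv ((n:ℤ) + 1 - (0:ℕ)) * (-Tv 2) ^ (0:ℕ) = Cv ((n:ℤ)+1) := by
    norm_num
  rw [h0, add_comm]
  have : ∀ i ∈ Finset.range (n+1),
      Cv ((n:ℤ) + 1 - ((i:ℕ)+1:ℕ)) * (-Tv 2) ^ (i+1)
        = -(Tv 2 * (Cv ((n:ℤ) - i) * (-Tv 2) ^ i)) := by
    intro i _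
    rw [pow_succ, show ((n:ℤ) + 1 - ((i:ℕ)+1:ℕ)) = (n:ℤ) - i from by push_cast; ring]
    ring
  rw [Finset.sum_congr rfl this, Finset.sum_neg_distrib]
  ring

lemma cc2_rec (n : ℕ) :
    cc 2 ((n:ℤ)+1) = Cv ((n:ℤ)+1) - Tv 1 * cc 1 (n:ℤ) - Tv 2 * cc 2 (n:ℤ) := by
  rw [cc_succ, cc_nat, cc_nat, Finset.mul_sum, Finset.mul_sum]
  have : ∀ i ∈ Finset.range (n+1),
      Cv ((n:ℤ) - i) * hmt 2 (i+1)
        = -(Tv 1 * (Cv ((n:ℤ) - i) * hmt 1 i)) + -(Tv 2 * (Cv ((n:ℤ) - i) * hmt 2 i)) := by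
    intro i _
    rw [hmt_two_succ_right, hmt_one, pow_succ]
    ring
  rw [Finset.sum_congr rfl this, Finset.sum_add_distrib,
    Finset.sum_neg_distrib, Finset.sum_neg_distrib]
  ring

lemma cc2_rec' (n : ℕ) :
    cc 2 ((n:ℤ)+1) = Cv ((n:ℤ)+1) - Tv 2 * cc1' (n:ℤ) - Tv 1 * cc 2 (n:ℤ) := by
  rw [cc_succ, cc_nat, cc1', show ((n:ℤ)).toNat = n from by omega,
    Finset.mul_sum, Finset.mul_sum]
  have : ∀ i ∈ Finset.range (n+1),
      Cv ((n:ℤ) - i) * hmt 2 (i+1)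
        = -(Tv 2 * (Cv ((n:ℤ) - i) * (-Tv 2) ^ i)) + -(Tv 1 * (Cv ((n:ℤ) - i) * hmt 2 i)) := by
    intro i _
    rw [hmt_two_succ_left, pow_succ]
    ring
  rw [Finset.sum_congr rfl this, Finset.sum_add_distrib,
    Finset.sum_neg_distrib, Finset.sum_neg_distrib]
  ring

lemma cc1_eq_cc2 (q : ℤ) : cc 1 q = cc 2 q + Tv 2 * cc 2 (q-1) := by
  rcases lt_trichotomy q 0 with h | h | h
  · rw [cc_neg _ h, cc_neg _ h, cc_neg 2 (by omega : q - 1 < 0)]; ring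
  · subst h; rw [cc_zero, cc_zero, cc_neg 2 (by norm_num : (0:ℤ) - 1 < 0)]; ring
  · obtain ⟨n, rfl⟩ : ∃ n : ℕ, q = (n:ℤ) + 1 := ⟨(q-1).toNat, by omega⟩
    rw [show (n:ℤ) + 1 - 1 = (n:ℤ) from by ring]
    linear_combination cc1_rec n - cc2_rec n

lemma cc1'_eq_cc2 (q : ℤ) : cc1' q = cc 2 q + Tv 1 * cc 2 (q-1) := by
  rcases lt_trichotomy q 0 with h | h | h
  · rw [cc1'_neg h, cc_neg _ h, cc_neg 2 (by omega : q - 1 < 0)]; ring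
  · subst h; rw [cc1'_zero, cc_zero, cc_neg 2 (by norm_num : (0:ℤ) - 1 < 0)]; ring
  · obtain ⟨n, rfl⟩ : ∃ n : ℕ, q = (n:ℤ) + 1 := ⟨(q-1).toNat, by omega⟩
    rw [show (n:ℤ) + 1 - 1 = (n:ℤ) from by ring]
    linear_combination cc1'_rec n - cc2_rec' n
lemma sA0_T1 (k : ℕ) : sA k 0 (Tv 1) = -Tv 2 := by
  simp [sA, Tv, sImgF]

lemma sA0_T2 (k : ℕ) : sA k 0 (Tv 2) = -Tv 1 := by
  simp [sA, Tv, sImgF]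

lemma sA0_fk (k : ℕ) : sA k 0 fk = fk - (Tv 1 + Tv 2) * cc 2 ((k:ℤ)-1) := by
  simp [sA, fk, sImgF]

lemma sA1_T1 (k : ℕ) : sA k 1 (Tv 1) = Tv 2 := by
  simp [sA, Tv, sImgF]

lemma sA1_T2 (k : ℕ) : sA k 1 (Tv 2) = Tv 1 := by
  simp [sA, Tv, sImgF]

lemma sA1_fk (k : ℕ) : sA k 1 fk = fk := by
  simp [sA, fk, sImgF]

lemma sA1_Cv (k : ℕ) (p : ℤ) : sA k 1 (Cv p) = Cv p := by
  rcases lt_trichotomy p 0 with h | h | h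
  · rw [Cv_neg h]; simp
  · subst h; rw [Cv_zero]; simp
  · rw [Cv_pos (by omega)]
    simp [sA, sImgF]

lemma sA0_Cv (k : ℕ) {p : ℤ} (hp : 1 ≤ p) :
    sA k 0 (Cv p) = Cv p - 2 * (Tv 1 + Tv 2) * cc 2 (p-1) := by
  obtain ⟨m, hm⟩ : ∃ m : ℕ, p.toNat = m + 1 := ⟨(p-1).toNat, by omega⟩
  have hpm : p = ((m:ℤ) + 1) := by omega
  rw [Cv_pos hp, hm]
  rw [sA, aeval_X]
  rw [show sImgF k 0 (Sum.inl (m+1))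
      = Cv ((m+1 : ℕ) : ℤ) - 2 * (Tv 1 + Tv 2) *
        ∑ j ∈ Finset.range (m+1), (-1 : R2) ^ j *
          (∑ a ∈ Finset.range (j + 1), Tv 1 ^ a * Tv 2 ^ (j - a)) * Cv (((m+1:ℕ) : ℤ) - 1 - j)
    from by simp [sImgF]]
  rw [hpm, show ((m:ℤ) + 1) - 1 = (m:ℤ) from by ring, cc_nat]
  have : ∀ j ∈ Finset.range (m+1),
      (-1 : R2) ^ j * (∑ a ∈ Finset.range (j + 1), Tv 1 ^ a * Tv 2 ^ (j - a))
          * Cv (((m+1:ℕ) : ℤ) - 1 - j)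
        = Cv ((m:ℤ) - j) * hmt 2 j := by
    intro j _
    rw [hmt_two_sign, show (((m+1:ℕ) : ℤ) - 1 - j) = (m:ℤ) - j from by push_cast; ring]
    ring
  rw [Finset.sum_congr rfl this,
    show (((m+1:ℕ)):ℤ) = (m:ℤ)+1 from by push_cast; ring,
    show Cv ((m:ℤ)+1) = X (Sum.inl (m+1)) from by
      rw [Cv_pos (by omega), show ((m:ℤ)+1).toNat = m+1 from by omega]]
lemma sA0_cc1_nat (k : ℕ) (n : ℕ) :
    sA k 0 (cc 1 (n:ℤ)) = cc 2 (n:ℤ) - Tv 1 * cc 2 ((n:ℤ)-1) := by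
  induction n with
  | zero =>
      rw [show ((0:ℕ):ℤ) = 0 from rfl, cc_zero, map_one, cc_zero,
        cc_neg 2 (by norm_num : (0:ℤ)-1 < 0)]
      ring
  | succ n ih =>
      rw [show ((n+1:ℕ):ℤ) = (n:ℤ)+1 from by push_cast; ring]
      rw [cc1_rec n, map_sub, map_mul, sA0_Cv k (by omega), sA0_T1, ih]
      rw [show (n:ℤ)+1-1 = (n:ℤ) from by ring, cc2_rec n, cc1_eq_cc2 (n:ℤ)]
      ring

lemma sA0_cc1 (k : ℕ) (q : ℤ) :
    sA k 0 (cc 1 q) = cc 2 q - Tv 1 * cc 2 (q-1) := by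
  rcases le_or_gt 0 q with h | h
  · obtain ⟨n, rfl⟩ : ∃ n : ℕ, q = (n:ℤ) := ⟨q.toNat, by omega⟩
    exact sA0_cc1_nat k n
  · rw [cc_neg 1 h, cc_neg 2 h, cc_neg 2 (by omega : q-1 < 0)]
    simp

lemma sA1_cc1 (k : ℕ) (q : ℤ) : sA k 1 (cc 1 q) = cc1' q := by
  rw [cc, map_sum, cc1']
  refine Finset.sum_congr rfl fun j _ => ?_
  rw [map_mul, sA1_Cv, hmt_one, map_pow, map_neg, sA1_T1]

lemma chat_eq (k : ℕ) :
    chat k (-1) ((k:ℤ)+1) = Cv ((k:ℤ)+1) - 2 * Tv 1 * fk := by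
  rw [chat, if_pos ⟨by ring, by norm_num⟩]
  have h1 : cc (-1) ((k:ℤ)+1) = Cv ((k:ℤ)+1) - Tv 1 * Cv (k:ℤ) := by
    rw [cc, show ((k:ℤ)+1).toNat = k+1 from by omega]
    rw [← Finset.sum_subset (Finset.range_subset_range.mpr (by omega : 2 ≤ k+1+1))
      (fun j _ hj => by
        have hj2 : 2 ≤ j := by simp at hj; omega
        rw [hmt_neg_one, if_neg (by omega), if_neg (by omega), mul_zero])]
    rw [Finset.sum_range_succ, Finset.sum_range_one, hmt_neg_one, hmt_neg_one]
    norm_num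
    ring
  have h2 : eprod ((k:ℤ)+1-(k:ℤ)) = -Tv 1 := by
    rw [show (k:ℤ)+1-(k:ℤ) = 1 from by ring, eprod]
    norm_num
  rw [h1, h2]
  ring

lemma fks_zero (k : ℕ) : fks k 0 = fk := by
  rw [fks, Finset.sum_eq_zero, add_zero]
  intro j hj
  have : j ≠ 0 := by simp at hj; omega
  rw [hmt_zero, if_neg this, mul_zero]

lemma range_succ_insert (k : ℕ) :
    Finset.range (k+1) = insert 0 (Finset.Icc 1 k) := by
  ext x; simp; omega

lemma fks_one (k : ℕ) : fks k 1 = fk + (cc 1 (k:ℤ) - Cv (k:ℤ)) := by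
  rw [fks, cc_nat, range_succ_insert, Finset.sum_insert (by simp)]
  rw [hmt_r_zero]
  norm_num

lemma aa_zero (k : ℕ) : aa 0 ((k:ℤ)+1) = C (1/2:ℚ) * Cv ((k:ℤ)+1) := by
  rw [aa, Finset.sum_eq_zero, add_zero]
  intro j hj
  have : j ≠ 0 := by simp at hj; omega
  rw [hmt_zero, if_neg this, mul_zero]

lemma aa_one (k : ℕ) :
    aa 1 ((k:ℤ)+1) = C (1/2:ℚ) * Cv ((k:ℤ)+1) + (cc 1 ((k:ℤ)+1) - Cv ((k:ℤ)+1)) := by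
  rw [aa, show ((k:ℤ)+1).toNat = k+1 from by omega]
  have hc : cc 1 ((k:ℤ)+1)
      = Cv ((k:ℤ)+1) + ∑ j ∈ Finset.Icc 1 (k+1), Cv ((k:ℤ)+1-j) * hmt 1 j := by
    rw [cc, show ((k:ℤ)+1).toNat = k+1 from by omega, range_succ_insert,
      Finset.sum_insert (by simp), hmt_r_zero]
    norm_num
  rw [hc]
  ring
theorem statement11 (k : ℕ) (hk : 1 ≤ k) (q : ℤ) :
    dd k 0 (chat k (-1) ((k : ℤ) + 1) * cc 1 q) =
      toK (2 * (ftils k 1 * cc 2 q + aa 1 ((k : ℤ) + 1) * cc 2 (q - 1))) ∧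
    dd k 1 (chat k (-1) ((k : ℤ) + 1) * cc 1 q) =
      toK (2 * (fks k 0 * cc 2 q + aa 0 ((k : ℤ) + 1) * cc 2 (q - 1))) ∧
    dd k 0 (chat k (-1) ((k : ℤ) + 1) * cc 1 q) +
        dd k 1 (chat k (-1) ((k : ℤ) + 1) * cc 1 q) =
      toK (2 * (cc 1 k * cc 2 q + cc 1 ((k : ℤ) + 1) * cc 2 (q - 1))) := by
  have h2 : (2 : R2) * C (1/2 : ℚ) = 1 := by
    rw [show (2:R2) = C (2:ℚ) from (map_ofNat C 2).symm, ← C_mul]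
    norm_num
  have hinj : Function.Injective toK := IsFractionRing.injective R2 KK
  have hdd0 : dden 0 = Tv 1 + Tv 2 := rfl
  have hdd1 : dden 1 = Tv 2 - Tv 1 := rfl
  have hden0 : toK (dden 0) ≠ 0 := by
    rw [hdd0, Ne, ← map_zero toK, hinj.eq_iff]
    intro h
    apply_fun (eval fun v => if v = Sum.inr 1 then (1:ℚ) else 0) at h
    simp [Tv] at h
  have hden1 : toK (dden 1) ≠ 0 := by
    rw [hdd1, Ne, ← map_zero toK, hinj.eq_iff]
    intro h
    apply_fun (eval fun v => if v = Sum.inr 1 then (1:ℚ) else 0) at h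
    simp [Tv] at h
  have e0 : chat k (-1) ((k : ℤ) + 1) * cc 1 q
      - sA k 0 (chat k (-1) ((k : ℤ) + 1) * cc 1 q)
      = (2 * (ftils k 1 * cc 2 q + aa 1 ((k : ℤ) + 1) * cc 2 (q - 1))) * (Tv 1 + Tv 2) := by
    rw [chat_eq, map_mul, map_sub, map_mul, map_mul, map_ofNat, sA0_T1, sA0_fk,
      sA0_Cv k (by omega : (1:ℤ) ≤ (k:ℤ)+1), sA0_cc1]
    rw [show (k:ℤ)+1-1 = (k:ℤ) from by ring]
    simp only [ftils]
    rw [cc1_eq_cc2 q, fks_one, aa_one, cc1_rec k, cc1_eq_cc2 (k:ℤ)]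
    linear_combination (-((Tv 1 + Tv 2) * Cv ((k:ℤ)+1) * cc 2 (q-1))) * h2
  have e1 : chat k (-1) ((k : ℤ) + 1) * cc 1 q
      - sA k 1 (chat k (-1) ((k : ℤ) + 1) * cc 1 q)
      = (2 * (fks k 0 * cc 2 q + aa 0 ((k : ℤ) + 1) * cc 2 (q - 1))) * (Tv 2 - Tv 1) := by
    rw [chat_eq, map_mul, map_sub, map_mul, map_mul, map_ofNat, sA1_T1, sA1_fk,
      sA1_Cv, sA1_cc1, cc1'_eq_cc2, cc1_eq_cc2 q, fks_zero, aa_zero]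
    linear_combination (-((Tv 2 - Tv 1) * Cv ((k:ℤ)+1) * cc 2 (q-1))) * h2
  have p0 : dd k 0 (chat k (-1) ((k : ℤ) + 1) * cc 1 q) =
      toK (2 * (ftils k 1 * cc 2 q + aa 1 ((k : ℤ) + 1) * cc 2 (q - 1))) := by
    rw [dd, div_eq_iff hden0, ← map_sub, hdd0, ← map_mul]
    exact congrArg toK e0
  have p1 : dd k 1 (chat k (-1) ((k : ℤ) + 1) * cc 1 q) =
      toK (2 * (fks k 0 * cc 2 q + aa 0 ((k : ℤ) + 1) * cc 2 (q - 1))) := by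
    rw [dd, div_eq_iff hden1, ← map_sub, hdd1, ← map_mul]
    exact congrArg toK e1
  refine ⟨p0, p1, ?_⟩
  rw [p0, p1, ← map_add]
  refine congrArg toK ?_
  simp only [ftils]
  rw [fks_one, aa_one, fks_zero, aa_zero]
  linear_combination (2 * Cv ((k:ℤ)+1) * cc 2 (q-1)) * h2
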